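/- Let j ∈ {1,…,q}, ν > 0 and s ∈ ℝⁿ. If |(T̄_ℓ − T_ℓ)[s,…,s]| ≤ (ν/2)·Δt̄_j(s) for every ℓ ∈ {1,…,j}, then |Δt_j(s) − Δt̄_j(s)| ≤ ((e−1)/2)·ν·Δt̄_j(s); in particular (1−ν)·Δt̄_j(s) ≤ Δt_j(s) ≤ (1+ν)·Δt̄_j(s). -/
import Mathlib

open scoped BigOperators

lemma sum_inv_factorial_le (j : ℕ) :
    ∑ ℓ ∈ Finset.Icc 1 j, (1 / (Nat.factorial ℓ : ℝ)) ≤ Real.exp 1 - 1 := by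
  have h := Real.sum_le_exp_of_nonneg (x := 1) (by norm_num) (j + 1)
  have hsplit : ∑ i ∈ Finset.range (j + 1), (1:ℝ) ^ i / (Nat.factorial i : ℝ)
      = 1 + ∑ ℓ ∈ Finset.Icc 1 j, (1 / (Nat.factorial ℓ : ℝ)) := by
    rw [Finset.range_eq_Ico, Finset.sum_eq_sum_Ico_succ_bot (Nat.succ_pos j),
      ← Finset.Ico_add_one_right_eq_Icc]
    norm_num
  linarith [hsplit ▸ h]

noncomputable def taylorDecrement {n : ℕ}
    (T : ∀ ℓ : ℕ, ContinuousMultilinearMap ℝ (fun _ : Fin ℓ => EuclideanSpace ℝ (Fin n)) ℝ)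
    (j : ℕ) (d : EuclideanSpace ℝ (Fin n)) : ℝ :=
  -∑ ℓ ∈ Finset.Icc 1 j, (1 / (Nat.factorial ℓ : ℝ)) * T ℓ (fun _ => d)

/-- Lemma 2.2, second conclusion: accuracy of the tensors along the step `s` implies
relative accuracy of the Taylor decrement:
`|Δt_j(s) − Δt̄_j(s)| ≤ ((e−1)/2)·ν·Δt̄_j(s)`, and in particular
`(1−ν)·Δt̄_j(s) ≤ Δt_j(s) ≤ (1+ν)·Δt̄_j(s)`. -/
theorem taylorDecrement_relative_accuracy
    (n q : ℕ) (hn : 1 ≤ n) (hq : 1 ≤ q)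
    (T Tb : ∀ ℓ : ℕ, ContinuousMultilinearMap ℝ (fun _ : Fin ℓ => EuclideanSpace ℝ (Fin n)) ℝ)
    (j : ℕ) (hj : j ∈ Finset.Icc 1 q)
    (ν : ℝ) (hν : 0 < ν)
    (s : EuclideanSpace ℝ (Fin n))
    (herr : ∀ ℓ ∈ Finset.Icc 1 j,
      |Tb ℓ (fun _ => s) - T ℓ (fun _ => s)| ≤ (ν / 2) * taylorDecrement Tb j s) :
    |taylorDecrement T j s - taylorDecrement Tb j s|
      ≤ ((Real.exp 1 - 1) / 2) * ν * taylorDecrement Tb j s ∧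
    (1 - ν) * taylorDecrement Tb j s ≤ taylorDecrement T j s ∧
    taylorDecrement T j s ≤ (1 + ν) * taylorDecrement Tb j s := by
  set D := taylorDecrement Tb j s with hD
  have hj1 : (1 : ℕ) ∈ Finset.Icc 1 j := by
    simp only [Finset.mem_Icc] at hj ⊢; omega
  have hD0 : 0 ≤ D := by
    have h1 := herr 1 hj1
    have := abs_nonneg (Tb 1 (fun _ => s) - T 1 (fun _ => s))
    nlinarith
  have hdiff : taylorDecrement T j s - D
      = ∑ ℓ ∈ Finset.Icc 1 j,
        (1 / (Nat.factorial ℓ : ℝ)) * (Tb ℓ (fun _ => s) - T ℓ (fun _ => s)) := by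
    simp only [hD, taylorDecrement, ← Finset.sum_sub_distrib]
    rw [neg_sub_neg, ← Finset.sum_sub_distrib]
    apply Finset.sum_congr rfl
    intro ℓ _; ring
  have hmain : |taylorDecrement T j s - D|
      ≤ ((Real.exp 1 - 1) / 2) * ν * D := by
    rw [hdiff]
    calc |∑ ℓ ∈ Finset.Icc 1 j,
          (1 / (Nat.factorial ℓ : ℝ)) * (Tb ℓ (fun _ => s) - T ℓ (fun _ => s))|
        ≤ ∑ ℓ ∈ Finset.Icc 1 j,
          |(1 / (Nat.factorial ℓ : ℝ)) * (Tb ℓ (fun _ => s) - T ℓ (fun _ => s))| :=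
          Finset.abs_sum_le_sum_abs _ _
      _ ≤ ∑ ℓ ∈ Finset.Icc 1 j, (1 / (Nat.factorial ℓ : ℝ)) * ((ν / 2) * D) := by
          apply Finset.sum_le_sum
          intro ℓ hℓ
          rw [abs_mul]
          have hf : |(1 / (Nat.factorial ℓ : ℝ))| = 1 / (Nat.factorial ℓ : ℝ) := by
            rw [abs_of_nonneg]; positivity
          rw [hf]
          exact mul_le_mul_of_nonneg_left (herr ℓ hℓ) (by positivity)
      _ = (∑ ℓ ∈ Finset.Icc 1 j, (1 / (Nat.factorial ℓ : ℝ))) * ((ν / 2) * D) := by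
          rw [Finset.sum_mul]
      _ ≤ (Real.exp 1 - 1) * ((ν / 2) * D) := by
          apply mul_le_mul_of_nonneg_right (sum_inv_factorial_le j) (by positivity)
      _ = ((Real.exp 1 - 1) / 2) * ν * D := by ring
  refine ⟨hmain, ?_, ?_⟩ <;>
  · have he : Real.exp 1 ≤ 3 := by
      have := Real.exp_one_lt_d9; linarith
    have habs := abs_le.mp hmain
    have hb : (Real.exp 1 - 1) / 2 * ν * D ≤ ν * D := by
      nlinarith [mul_nonneg hν.le hD0]
    linarith [habs.1, habs.2]
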